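/- Suppose (√P·a + √Q·b)² ≥ ρσ² (feasibility of (P-S4)). Then the supremum of a²v₁²/σ² over all v₁, v₂ ≥ 0 with (a·v₂ + √Q·b)²/(σ² + a²v₁²) ≥ ρ and v₁² + v₂² ≤ P equals γ*₁,S4, where γ*₁,S4 = Pa²/σ² if Qb²/(σ² + Pa²) ≥ ρ, and γ*₁,S4 = a²(P − v₂*²)/σ² with v₂* = (√A − √Q·b)/(a(1+ρ)), A = Pρ(1+ρ)a² + ρ(1+ρ)σ² − ρQb², otherwise; in the first case the supremum is attained at (v₁, v₂) = (√P, 0) and in the second case at (√(P − v₂*²), v₂*). -/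
import Mathlib

set_option maxHeartbeats 1000000

/-- Optimal value of problem (P-S4) (equation (18) of the paper), together with
the points attaining it in each case. -/
theorem stmt_11 (a b P Q σ2 ρ : ℝ) (ha : 0 < a) (hb : 0 < b) (hP : 0 < P)
    (hQ : 0 < Q) (hσ : 0 < σ2) (hρ : 0 < ρ)
    (hfeas : (Real.sqrt P * a + Real.sqrt Q * b) ^ 2 ≥ ρ * σ2)
    (A v2star γS4 : ℝ)
    (hA : A = P * ρ * (1 + ρ) * a ^ 2 + ρ * (1 + ρ) * σ2 - ρ * Q * b ^ 2)
    (hv2 : v2star = (Real.sqrt A - Real.sqrt Q * b) / (a * (1 + ρ)))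
    (hγ : γS4 = if Q * b ^ 2 / (σ2 + P * a ^ 2) ≥ ρ
      then P * a ^ 2 / σ2
      else a ^ 2 * (P - v2star ^ 2) / σ2) :
    IsGreatest {x : ℝ | ∃ v1 v2 : ℝ, 0 ≤ v1 ∧ 0 ≤ v2 ∧
        (a * v2 + Real.sqrt Q * b) ^ 2 / (σ2 + a ^ 2 * v1 ^ 2) ≥ ρ ∧
        v1 ^ 2 + v2 ^ 2 ≤ P ∧ x = a ^ 2 * v1 ^ 2 / σ2} γS4 ∧
    (Q * b ^ 2 / (σ2 + P * a ^ 2) ≥ ρ →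
      (0 ≤ Real.sqrt P ∧ (0:ℝ) ≤ 0 ∧
       (a * 0 + Real.sqrt Q * b) ^ 2 / (σ2 + a ^ 2 * Real.sqrt P ^ 2) ≥ ρ ∧
       Real.sqrt P ^ 2 + 0 ^ 2 ≤ P ∧
       a ^ 2 * Real.sqrt P ^ 2 / σ2 = γS4)) ∧
    (¬ (Q * b ^ 2 / (σ2 + P * a ^ 2) ≥ ρ) →
      (0 ≤ Real.sqrt (P - v2star ^ 2) ∧ 0 ≤ v2star ∧
       (a * v2star + Real.sqrt Q * b) ^ 2 /
         (σ2 + a ^ 2 * Real.sqrt (P - v2star ^ 2) ^ 2) ≥ ρ ∧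
       Real.sqrt (P - v2star ^ 2) ^ 2 + v2star ^ 2 ≤ P ∧
       a ^ 2 * Real.sqrt (P - v2star ^ 2) ^ 2 / σ2 = γS4)) := by
  have hp : Real.sqrt P ^ 2 = P := Real.sq_sqrt hP.le
  have hp0 : 0 ≤ Real.sqrt P := Real.sqrt_nonneg P
  set q := Real.sqrt Q * b with hqdef
  have hq0 : 0 ≤ q := mul_nonneg (Real.sqrt_nonneg Q) hb.le
  have hq2 : q ^ 2 = Q * b ^ 2 := by rw [hqdef, mul_pow, Real.sq_sqrt hQ.le]
  have hS : 0 < σ2 + P * a ^ 2 := by positivity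
  by_cases hc : Q * b ^ 2 / (σ2 + P * a ^ 2) ≥ ρ
  · -- case 1
    have hc' : ρ * (σ2 + P * a ^ 2) ≤ Q * b ^ 2 := by
      rw [ge_iff_le, le_div_iff₀ hS] at hc; linarith
    rw [hγ, if_pos hc]
    have hcon : (a * 0 + q) ^ 2 / (σ2 + a ^ 2 * Real.sqrt P ^ 2) ≥ ρ := by
      rw [hp]
      have h1 : (a * 0 + q) ^ 2 = Q * b ^ 2 := by rw [mul_zero, zero_add, hq2]
      rw [h1, ge_iff_le, le_div_iff₀ (by positivity)]
      linarith
    have hmem : (0:ℝ) ≤ Real.sqrt P ∧ (0:ℝ) ≤ 0 ∧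
        (a * 0 + q) ^ 2 / (σ2 + a ^ 2 * Real.sqrt P ^ 2) ≥ ρ ∧
        Real.sqrt P ^ 2 + 0 ^ 2 ≤ P ∧
        a ^ 2 * Real.sqrt P ^ 2 / σ2 = P * a ^ 2 / σ2 := by
      refine ⟨hp0, le_refl 0, hcon, by rw [hp]; norm_num, by rw [hp]; ring⟩
    refine ⟨⟨⟨Real.sqrt P, 0, hmem.1, hmem.2.1, hmem.2.2.1, hmem.2.2.2.1,
        hmem.2.2.2.2.symm⟩, ?_⟩, fun _ => hmem, fun h => absurd hc h⟩
    rintro x ⟨v1, v2, hv1, hv2n, hcon', hsum, rfl⟩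
    have h2 : v1 ^ 2 ≤ P := by linarith [sq_nonneg v2]
    have h1 : a ^ 2 * v1 ^ 2 ≤ P * a ^ 2 := by
      have := mul_le_mul_of_nonneg_left h2 (sq_nonneg a); linarith
    exact div_le_div_of_nonneg_right h1 hσ.le
  · -- case 2
    have hc' : Q * b ^ 2 < ρ * (σ2 + P * a ^ 2) := by
      rw [not_le, div_lt_iff₀ hS] at hc; linarith
    have h1ρ : (0:ℝ) < 1 + ρ := by linarith
    have hA0 : 0 < A := by
      have h := mul_lt_mul_of_pos_left hc' hρ
      rw [hA]
      linarith [mul_pos hρ hσ, mul_pos (mul_pos hP hρ) (mul_pos ha ha)]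
    set s := Real.sqrt A with hsdef
    have hs2 : s ^ 2 = A := Real.sq_sqrt hA0.le
    have hs0 : 0 ≤ s := Real.sqrt_nonneg A
    have hs2' : s ^ 2 = ρ * (1 + ρ) * (σ2 + P * a ^ 2) - ρ * q ^ 2 := by
      rw [hs2, hA, hq2]; ring
    have hAq : q ^ 2 < s ^ 2 := by
      rw [hs2', hq2]
      have h := mul_lt_mul_of_pos_left hc' h1ρ
      linarith
    have hqs : q < s := lt_of_pow_lt_pow_left₀ 2 hs0 hAq
    have hd : 0 < a * (1 + ρ) := by positivity
    have hv20 : 0 < v2star := by rw [hv2]; exact div_pos (by linarith) hd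
    have hrel : (a * (1 + ρ) * v2star + q) ^ 2
        = ρ * (1 + ρ) * (σ2 + P * a ^ 2) - ρ * q ^ 2 := by
      have h : a * (1 + ρ) * v2star = s - q := by rw [hv2]; field_simp
      rw [h, show s - q + q = s by ring]; exact hs2'
    have hkey : (a * v2star + q) ^ 2 = ρ * (σ2 + a ^ 2 * (P - v2star ^ 2)) := by
      have h : (1 + ρ) * ((a * v2star + q) ^ 2)
          = (1 + ρ) * (ρ * (σ2 + a ^ 2 * (P - v2star ^ 2))) := by
        linear_combination hrel
      exact mul_left_cancel₀ h1ρ.ne' h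
    -- v2star^2 ≤ P
    have hPa2 : Real.sqrt P ^ 2 * (ρ * (1 + ρ) * a ^ 2)
        = P * (ρ * (1 + ρ) * a ^ 2) := by rw [hp]
    have hfeas' : (1 + ρ) * (ρ * σ2) ≤ (1 + ρ) * (Real.sqrt P * a + q) ^ 2 :=
      mul_le_mul_of_nonneg_left hfeas h1ρ.le
    have hB2 : s ^ 2 ≤ (Real.sqrt P * a * (1 + ρ) + q) ^ 2 := by
      nlinarith [hfeas', hs2', hPa2]
    have hB0 : 0 ≤ Real.sqrt P * a * (1 + ρ) + q := by positivity
    have hAB : A ≤ (Real.sqrt P * a * (1 + ρ) + q) ^ 2 := by rw [← hs2]; exact hB2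
    have hsle : s ≤ Real.sqrt P * a * (1 + ρ) + q := by
      rw [hsdef]
      calc Real.sqrt A ≤ Real.sqrt ((Real.sqrt P * a * (1 + ρ) + q) ^ 2) :=
            Real.sqrt_le_sqrt hAB
        _ = Real.sqrt P * a * (1 + ρ) + q := Real.sqrt_sq hB0
    have hv2le : v2star ≤ Real.sqrt P := by
      rw [hv2, div_le_iff₀ hd]; linarith [hsle]
    have hv2P : v2star ^ 2 ≤ P := by
      calc v2star ^ 2 ≤ Real.sqrt P ^ 2 := pow_le_pow_left₀ hv20.le hv2le 2
        _ = P := hp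
    have hPv : (0:ℝ) ≤ P - v2star ^ 2 := by linarith
    have hw1 : Real.sqrt (P - v2star ^ 2) ^ 2 = P - v2star ^ 2 := Real.sq_sqrt hPv
    have hden : 0 < σ2 + a ^ 2 * (P - v2star ^ 2) := by
      have := mul_nonneg (sq_nonneg a) hPv; linarith
    have hcon : (a * v2star + q) ^ 2
        / (σ2 + a ^ 2 * Real.sqrt (P - v2star ^ 2) ^ 2) ≥ ρ := by
      rw [hw1, hkey, ge_iff_le, le_div_iff₀ hden]
    rw [hγ, if_neg hc]
    have hmem : (0:ℝ) ≤ Real.sqrt (P - v2star ^ 2) ∧ 0 ≤ v2star ∧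
        (a * v2star + q) ^ 2 / (σ2 + a ^ 2 * Real.sqrt (P - v2star ^ 2) ^ 2) ≥ ρ ∧
        Real.sqrt (P - v2star ^ 2) ^ 2 + v2star ^ 2 ≤ P ∧
        a ^ 2 * Real.sqrt (P - v2star ^ 2) ^ 2 / σ2 = a ^ 2 * (P - v2star ^ 2) / σ2 :=
      ⟨Real.sqrt_nonneg _, hv20.le, hcon, by rw [hw1]; linarith, by rw [hw1]⟩
    refine ⟨⟨⟨Real.sqrt (P - v2star ^ 2), v2star, hmem.1, hmem.2.1, hmem.2.2.1,
        hmem.2.2.2.1, hmem.2.2.2.2.symm⟩, ?_⟩, fun h => absurd h hc, fun _ => hmem⟩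
    rintro x ⟨v1, v2, hv1n, hv2n, hcon', hsum, rfl⟩
    have hPv1 : (0:ℝ) ≤ P - v1 ^ 2 := by linarith [sq_nonneg v2]
    set w := Real.sqrt (P - v1 ^ 2) with hwdef
    have hw2 : w ^ 2 = P - v1 ^ 2 := Real.sq_sqrt hPv1
    have hw0 : 0 ≤ w := Real.sqrt_nonneg _
    have hv2w : v2 ≤ w :=
      le_of_pow_le_pow_left₀ two_ne_zero hw0 (by rw [hw2]; linarith)
    have hden1 : 0 < σ2 + a ^ 2 * v1 ^ 2 := by positivity
    have hcon2 : ρ * (σ2 + a ^ 2 * v1 ^ 2) ≤ (a * v2 + q) ^ 2 := by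
      rw [ge_iff_le, le_div_iff₀ hden1] at hcon'; linarith
    have hcon3 : ρ * (σ2 + a ^ 2 * v1 ^ 2) ≤ (a * w + q) ^ 2 := by
      have h0 : 0 ≤ a * v2 + q := by positivity
      have hle2 : a * v2 + q ≤ a * w + q := by
        have := mul_le_mul_of_nonneg_left hv2w ha.le; linarith
      exact hcon2.trans (pow_le_pow_left₀ h0 hle2 2)
    have hwv : v2star ≤ w := by
      by_contra hlt
      push_neg at hlt
      have haw : 0 ≤ a * w := mul_nonneg ha.le hw0
      have h1 : a * w < a * v2star := mul_lt_mul_of_pos_left hlt ha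
      have h2 : (a * w + q) ^ 2 < (a * v2star + q) ^ 2 :=
        pow_lt_pow_left₀ (by linarith) (by positivity) two_ne_zero
      have h3 : a ^ 2 * w ^ 2 ≤ a ^ 2 * v2star ^ 2 := by
        have h := pow_le_pow_left₀ haw h1.le 2
        calc a ^ 2 * w ^ 2 = (a * w) ^ 2 := by ring
          _ ≤ (a * v2star) ^ 2 := h
          _ = a ^ 2 * v2star ^ 2 := by ring
      have h4 := mul_le_mul_of_nonneg_left h3 hρ.le
      have hw2' : ρ * (a ^ 2 * w ^ 2) = ρ * (a ^ 2 * P) - ρ * (a ^ 2 * v1 ^ 2) := by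
        rw [hw2]; ring
      linarith [hcon3, hkey, hw2', h2, h4]
    have hfin : v1 ^ 2 ≤ P - v2star ^ 2 := by
      have := pow_le_pow_left₀ hv20.le hwv 2
      linarith [hw2]
    have hfin2 : a ^ 2 * v1 ^ 2 ≤ a ^ 2 * (P - v2star ^ 2) :=
      mul_le_mul_of_nonneg_left hfin (sq_nonneg a)
    exact div_le_div_of_nonneg_right hfin2 hσ.le
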